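/- The monic Meixner polynomials 𝒮_n(x; a; p) := Σ_{k=0}^n C(n,k) (1 - 1/p)^{k-n} (a+k)^{(n-k)} (x)_k satisfy the orthogonality relation Σ_{ℓ=0}^∞ 𝒮_n(ℓ; a; p) 𝒮_m(ℓ; a; p) NB(a,p)({ℓ}) = 1{n=m} · p^n n! (a)^{(n)} / (1-p)^{2n}, where NB(a,p)({ℓ}) = (a)^{(ℓ)} p^ℓ (1-p)^a / ℓ!. -/

import Mathlib

set_option maxHeartbeats 1000000

/-- Rising factorial (Pochhammer symbol) `(a)^{(k)} = a(a+1)⋯(a+k-1)`. -/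
noncomputable def risingFact (a : ℝ) (k : ℕ) : ℝ := ∏ i ∈ Finset.range k, (a + i)

/-- The monic Meixner polynomial
`𝒮_n(x;a;p) = ∑_{k=0}^n C(n,k) (1-1/p)^{k-n} (a+k)^{(n-k)} (x)_k`. -/
noncomputable def meixner (n : ℕ) (a p : ℝ) (x : ℕ) : ℝ :=
  ∑ k ∈ Finset.range (n + 1),
    (n.choose k : ℝ) * (1 - 1 / p) ^ ((k : ℤ) - (n : ℤ)) *
      risingFact (a + k) (n - k) * (x.descFactorial k : ℝ)


open Finset in
lemma risingFact_zero (a : ℝ) : risingFact a 0 = 1 := by simp [risingFact]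

open Finset in
lemma risingFact_succ (a : ℝ) (k : ℕ) :
    risingFact a (k + 1) = risingFact a k * (a + k) := by
  simp [risingFact, Finset.prod_range_succ]

open Finset in
lemma risingFact_succ' (a : ℝ) (k : ℕ) :
    risingFact a (k + 1) = a * risingFact (a + 1) k := by
  rw [risingFact, risingFact, Finset.prod_range_succ']
  rw [mul_comm]
  congr 1
  · simp
  · apply Finset.prod_congr rfl
    intro i _
    push_cast
    ring

lemma risingFact_pos {a : ℝ} (ha : 0 < a) (k : ℕ) : 0 < risingFact a k := by
  apply Finset.prod_pos
  intro i _
  positivity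

lemma descFactorial_real (x k : ℕ) :
    ((x : ℝ) - k) * (x.descFactorial k : ℝ) = (x.descFactorial (k + 1) : ℝ) := by
  rcases le_or_gt k x with h | h
  · rw [Nat.descFactorial_succ]
    push_cast [Nat.cast_sub h]
    ring
  · rw [Nat.descFactorial_eq_zero_iff_lt.2 h,
      Nat.descFactorial_eq_zero_iff_lt.2 (Nat.lt_succ_of_lt h)]
    simp

lemma descFactorial_succ_left (x k : ℕ) :
    (((x + 1).descFactorial (k + 1) : ℝ)) = ((x : ℝ) + 1) * (x.descFactorial k : ℝ) := by
  rw [Nat.succ_descFactorial_succ]; push_cast; ring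

lemma descFactorial_succ_right_real (x k : ℕ) :
    ((x + 1).descFactorial k : ℝ) = (x.descFactorial k : ℝ) + k * (x.descFactorial (k-1) : ℝ) := by
  cases k with
  | zero => simp
  | succ k =>
    rw [descFactorial_succ_left, Nat.succ_sub_one, ← descFactorial_real]
    push_cast
    ring

noncomputable def nbW (a p : ℝ) (ℓ : ℕ) : ℝ :=
  risingFact a ℓ * p ^ ℓ * (1 - p) ^ a / (ℓ.factorial : ℝ)

lemma nbW_pos {a p : ℝ} (ha : 0 < a) (hp : p ∈ Set.Ioo (0:ℝ) 1) (ℓ : ℕ) :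
    0 < nbW a p ℓ := by
  have h1 : (0:ℝ) < 1 - p := by linarith [hp.2]
  have h2 := risingFact_pos ha ℓ
  have h3 : (0:ℝ) < (1 - p) ^ a := Real.rpow_pos_of_pos h1 a
  have h4 : (0:ℝ) < ℓ.factorial := by positivity
  have h5 : (0:ℝ) < p ^ ℓ := pow_pos hp.1 ℓ
  unfold nbW
  positivity

lemma nbW_succ {a p : ℝ} (ℓ : ℕ) :
    ((ℓ:ℝ) + 1) * nbW a p (ℓ + 1) = p * (a + ℓ) * nbW a p ℓ := by
  unfold nbW
  rw [risingFact_succ, Nat.factorial_succ]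
  have hfac : (ℓ.factorial : ℝ) ≠ 0 := Nat.cast_ne_zero.2 ℓ.factorial_ne_zero
  push_cast
  field_simp
  ring

lemma nbW_param {a p : ℝ} (ha : 0 < a) (hp : p ∈ Set.Ioo (0:ℝ) 1) (ℓ : ℕ) :
    ((a:ℝ) + ℓ) * nbW a p ℓ = a / (1 - p) * nbW (a+1) p ℓ := by
  have h1 : (0:ℝ) < 1 - p := by linarith [hp.2]
  unfold nbW
  have hra : risingFact a ℓ * (a + ℓ) = a * risingFact (a+1) ℓ := by
    rw [← risingFact_succ, risingFact_succ']
  have hrp : (1 - p) ^ (a + 1) = (1 - p) ^ a * (1 - p) := by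
    rw [Real.rpow_add h1, Real.rpow_one]
  rw [hrp]
  have hfac : (ℓ.factorial : ℝ) ≠ 0 := Nat.cast_ne_zero.2 ℓ.factorial_ne_zero
  field_simp
  linear_combination (p ^ ℓ) * hra

open Filter in
lemma summable_pow_nbW {a p : ℝ} (ha : 0 < a) (hp : p ∈ Set.Ioo (0:ℝ) 1) (d : ℕ) :
    Summable (fun ℓ : ℕ => ((ℓ:ℝ) + 1) ^ d * nbW a p ℓ) := by
  obtain ⟨hp0, hp1⟩ := hp
  set f : ℕ → ℝ := fun ℓ => ((ℓ:ℝ) + 1) ^ d * nbW a p ℓ with hf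
  have hfpos : ∀ ℓ, 0 < f ℓ := by
    intro ℓ
    have := nbW_pos ha ⟨hp0, hp1⟩ ℓ
    positivity
  set g : ℕ → ℝ := fun ℓ => (((ℓ:ℝ) + 2) / ((ℓ:ℝ) + 1)) ^ d * (p * (a + ℓ) / ((ℓ:ℝ) + 1)) with hg
  have key : ∀ ℓ, f (ℓ + 1) = g ℓ * f ℓ := by
    intro ℓ
    have h1 : ((ℓ:ℝ) + 1) ≠ 0 := by positivity
    have h2 := nbW_succ (a := a) (p := p) ℓ
    have : nbW a p (ℓ + 1) = p * (a + ℓ) * nbW a p ℓ / ((ℓ:ℝ)+1) := by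
      field_simp at h2 ⊢
      linarith [h2]
    simp only [hf, hg, this]
    push_cast
    rw [div_pow]
    field_simp
    ring
  apply summable_of_ratio_test_tendsto_lt_one hp1 (Eventually.of_forall fun n => (hfpos n).ne')
  have hratio : (fun ℓ : ℕ => ‖f (ℓ + 1)‖ / ‖f ℓ‖) = g := by
    funext ℓ
    rw [key ℓ, Real.norm_eq_abs, Real.norm_eq_abs, abs_of_pos (hfpos ℓ),
      abs_of_pos (by rw [← key ℓ]; exact hfpos (ℓ+1)), mul_div_assoc,
      div_self (hfpos ℓ).ne', mul_one]
  rw [hratio]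
  have h1 : Tendsto (fun ℓ : ℕ => 1 / ((ℓ:ℝ) + 1)) atTop (nhds 0) :=
    tendsto_one_div_add_atTop_nhds_zero_nat
  have h2 : Tendsto (fun ℓ : ℕ => (((ℓ:ℝ) + 2) / ((ℓ:ℝ) + 1)) ^ d) atTop (nhds 1) := by
    have : Tendsto (fun ℓ : ℕ => ((ℓ:ℝ) + 2) / ((ℓ:ℝ) + 1)) atTop (nhds 1) := by
      have heq : (fun ℓ : ℕ => ((ℓ:ℝ) + 2) / ((ℓ:ℝ) + 1))
          = fun ℓ : ℕ => 1 + 1 / ((ℓ:ℝ) + 1) := by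
        funext ℓ
        have : ((ℓ:ℝ) + 1) ≠ 0 := by positivity
        field_simp
        ring
      rw [heq]
      simpa using tendsto_const_nhds.add h1
    simpa using this.pow d
  have h3 : Tendsto (fun ℓ : ℕ => p * (a + ℓ) / ((ℓ:ℝ) + 1)) atTop (nhds p) := by
    have heq : (fun ℓ : ℕ => p * (a + ℓ) / ((ℓ:ℝ) + 1))
        = fun ℓ : ℕ => p * (1 + (a - 1) * (1 / ((ℓ:ℝ) + 1))) := by
      funext ℓ
      have : ((ℓ:ℝ) + 1) ≠ 0 := by positivity
      rw [mul_comm]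
      rw [div_eq_iff this]
      field_simp
      ring
    rw [heq]
    have : Tendsto (fun ℓ : ℕ => 1 + (a - 1) * (1 / ((ℓ:ℝ) + 1))) atTop (nhds 1) := by
      simpa using tendsto_const_nhds.add (h1.const_mul (a - 1))
    simpa using this.const_mul p
  simpa using h2.mul h3

lemma summable_bounded_nbW {a p : ℝ} (ha : 0 < a) (hp : p ∈ Set.Ioo (0:ℝ) 1)
    {f : ℕ → ℝ} {C : ℝ} {d : ℕ} (hf : ∀ ℓ, |f ℓ| ≤ C * ((ℓ:ℝ) + 1) ^ d) :
    Summable (fun ℓ : ℕ => f ℓ * nbW a p ℓ) := by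
  apply Summable.of_norm_bounded (g := fun ℓ : ℕ => C * (((ℓ:ℝ) + 1) ^ d * nbW a p ℓ))
    ((summable_pow_nbW ha hp d).mul_left C)
  intro ℓ
  have hw := (nbW_pos ha hp ℓ).le
  rw [Real.norm_eq_abs, abs_mul, abs_of_nonneg hw, ← mul_assoc]
  exact mul_le_mul_of_nonneg_right (hf ℓ) hw

open Filter Set in
lemma tsum_nbW_eq_one {b p : ℝ} (hb : 0 < b) (hp : p ∈ Set.Ioo (0:ℝ) 1) :
    ∑' ℓ : ℕ, nbW b p ℓ = 1 := by
  obtain ⟨hp0, hp1⟩ := hp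
  set r : ℝ := (1 + p) / 2 with hr
  have hr0 : 0 < r := by positivity
  have hrp : p < r := by rw [hr]; linarith
  have hr1 : r < 1 := by rw [hr]; linarith
  have hrIoo : r ∈ Set.Ioo (0:ℝ) 1 := ⟨hr0, hr1⟩
  have hWr : (0:ℝ) < (1 - r) ^ b := Real.rpow_pos_of_pos (by linarith) b
  -- the power series terms
  set g : ℕ → ℝ → ℝ := fun n x => risingFact b n / n.factorial * x ^ n with hgdef
  set g' : ℕ → ℝ → ℝ := fun n x => risingFact b n / n.factorial * (n * x ^ (n - 1)) with hg'def
  have hfac : ∀ n : ℕ, (0:ℝ) < n.factorial := fun n => by positivity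
  -- relation between g and nbW at radius r
  have hgr : ∀ n : ℕ, g n r = nbW b r n / (1 - r) ^ b := by
    intro n
    rw [hgdef]; simp only []
    rw [nbW]
    field_simp
  -- summable bound u for derivatives
  have hu : Summable (fun n : ℕ => (n:ℝ) * nbW b r n) := by
    apply summable_bounded_nbW hb hrIoo (C := 1) (d := 1)
    intro ℓ
    rw [abs_of_nonneg (by positivity)]
    push_cast; linarith
  set u : ℕ → ℝ := fun n => (n:ℝ) * nbW b r n / ((1 - r) ^ b * r) with hudef
  have huS : Summable u := by
    simpa [hudef, div_eq_mul_inv, mul_assoc] using hu.mul_right ((1 - r) ^ b * r)⁻¹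
  have hnbW_eq : ∀ n : ℕ, nbW b r n = risingFact b n * r ^ n * (1 - r) ^ b / n.factorial :=
    fun n => rfl
  -- bound on derivatives over t
  set t : Set ℝ := Set.Ioo (-r) r with htdef
  have ht : IsOpen t := isOpen_Ioo
  have h't : IsPreconnected t := (convex_Ioo _ _).isPreconnected
  have hg : ∀ (n : ℕ) (y : ℝ), y ∈ t → HasDerivAt (g n) (g' n y) y := by
    intro n y _
    exact (hasDerivAt_pow n y).const_mul _
  have hg' : ∀ (n : ℕ) (y : ℝ), y ∈ t → ‖g' n y‖ ≤ u n := by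
    intro n y hy
    have hyr : |y| ≤ r := by
      rw [abs_le]; exact ⟨hy.1.le, hy.2.le⟩
    have hRF := (risingFact_pos hb n).le
    rw [hg'def]; simp only []
    rw [Real.norm_eq_abs, abs_mul, abs_mul, abs_of_nonneg (by positivity : (0:ℝ) ≤ risingFact b n / n.factorial), abs_of_nonneg (by positivity : (0:ℝ) ≤ (n:ℝ)), abs_pow]
    match n with
    | 0 => simp [hudef]
    | (m+1) =>
      set n := m + 1 with hndef
      have h1 : |y| ^ (n-1) ≤ r ^ (n-1) := pow_le_pow_left₀ (abs_nonneg _) hyr _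
      have h2 : r ^ (n - 1) = r ^ n / r := by
        rw [hndef]
        simp only [Nat.add_sub_cancel]
        rw [pow_succ]
        field_simp
      calc risingFact b n / n.factorial * ((n:ℝ) * |y| ^ (n-1))
          ≤ risingFact b n / n.factorial * ((n:ℝ) * r ^ (n-1)) := by
            apply mul_le_mul_of_nonneg_left _ (by positivity)
            exact mul_le_mul_of_nonneg_left h1 (by positivity)
        _ = u n := by
            rw [hudef]; simp only []
            rw [hnbW_eq n, h2]
            field_simp
  have hy₀ : (0:ℝ) ∈ t := by constructor <;> simp [hr0] <;> linarith
  have hg0 : Summable fun n => g n 0 := by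
    apply summable_of_ne_finset_zero (s := {0})
    intro n hn
    have : n ≠ 0 := by simpa using hn
    rw [hgdef]; simp [zero_pow this]
  -- F and its derivative
  set F : ℝ → ℝ := fun x => ∑' n, g n x with hFdef
  have hFderiv : ∀ x ∈ t, HasDerivAt F (∑' n, g' n x) x := by
    intro x hx
    exact hasDerivAt_tsum_of_isPreconnected huS ht h't hg hg' hy₀ hg0 hx
  have hFsummable : ∀ x ∈ t, Summable fun n => g n x := by
    intro x hx
    exact summable_of_summable_hasDerivAt_of_isPreconnected huS ht h't hg hg' hy₀ hg0 hx
  -- the ODE : (1-x) * D x = b * F x on t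
  have hODE : ∀ x ∈ t, (1 - x) * (∑' n, g' n x) = b * F x := by
    intro x hx
    have hxr : |x| ≤ r := by rw [abs_le]; exact ⟨hx.1.le, hx.2.le⟩
    have hS1 : Summable (fun n => g' n x) :=
      Summable.of_norm_bounded (g := u) huS (fun n => hg' n x hx)
    have hSg : Summable (fun n => g n x) := hFsummable x hx
    -- h n = n * g n x  is summable
    have hSh : Summable (fun n : ℕ => (n:ℝ) * g n x) := by
      apply Summable.of_norm_bounded (g := u) huS
      intro n
      have hRF := (risingFact_pos hb n).le
      rw [Real.norm_eq_abs, abs_mul, abs_of_nonneg (by positivity : (0:ℝ) ≤ (n:ℝ)),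
        hgdef]
      simp only []
      rw [abs_mul, abs_of_nonneg (by positivity : (0:ℝ) ≤ risingFact b n / n.factorial), abs_pow]
      have h1 : |x| ^ n ≤ r ^ n := pow_le_pow_left₀ (abs_nonneg _) hxr _
      calc (n:ℝ) * (risingFact b n / n.factorial * |x| ^ n)
          ≤ (n:ℝ) * (risingFact b n / n.factorial * r ^ n) := by
            apply mul_le_mul_of_nonneg_left _ (Nat.cast_nonneg n)
            exact mul_le_mul_of_nonneg_left h1 (by positivity)
        _ ≤ u n := by
            rw [hudef]; simp only []
            rw [hnbW_eq n]
            rw [le_div_iff₀ (by positivity)]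
            have h1 : (n:ℝ) * (risingFact b n / n.factorial * r ^ n) * ((1-r)^b * r)
                = ((n:ℝ) * (risingFact b n * r ^ n * (1 - r) ^ b / n.factorial)) * r := by
              ring
            rw [h1]
            have hX : (0:ℝ) ≤ (n:ℝ) * (risingFact b n * r ^ n * (1 - r) ^ b / n.factorial) :=
              mul_nonneg (Nat.cast_nonneg n) (div_nonneg
                (mul_nonneg (mul_nonneg hRF (pow_pos hr0 n).le) hWr.le) (hfac n).le)
            exact mul_le_of_le_one_right hX hr1.le
    -- shifted sum for derivative
    have hD : (∑' n, g' n x) = ∑' m : ℕ, risingFact b (m+1) / m.factorial * x ^ m := by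
      rw [Summable.tsum_eq_zero_add hS1]
      have h0 : g' 0 x = 0 := by rw [hg'def]; simp
      rw [h0, zero_add]
      congr 1
      funext m
      rw [hg'def]; simp only []
      rw [Nat.factorial_succ]
      have : ((m+1 : ℕ):ℝ) ≠ 0 := by positivity
      push_cast
      field_simp
    have hSshift : Summable (fun m : ℕ => risingFact b (m+1) / m.factorial * x ^ m) := by
      have := (summable_nat_add_iff (f := fun n => g' n x) 1).2 hS1
      apply this.congr
      intro m
      rw [hg'def]; simp only []
      rw [Nat.factorial_succ]
      push_cast
      field_simp
    have hxD : x * (∑' n, g' n x) = ∑' n : ℕ, (n:ℝ) * g n x := by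
      rw [hD, ← tsum_mul_left]
      rw [Summable.tsum_eq_zero_add hSh]
      simp only [Nat.cast_zero, zero_mul, zero_add]
      congr 1
      funext m
      rw [hgdef]; simp only []
      rw [Nat.factorial_succ]
      push_cast
      field_simp
      ring
    rw [sub_mul, one_mul, hxD, hD]
    rw [← Summable.tsum_sub hSshift hSh]
    rw [hFdef]
    simp only []
    rw [← tsum_mul_left]
    congr 1
    funext m
    rw [hgdef]; simp only []
    rw [risingFact_succ]
    field_simp
    ring
  -- G = (1-x)^b * F x is constant on [0, p]
  set G : ℝ → ℝ := fun x => (1 - x) ^ b * F x with hGdef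
  have hGderiv : ∀ x ∈ t, HasDerivAt G 0 x := by
    intro x hx
    have h1x : (0:ℝ) < 1 - x := by linarith [hx.2, hr1]
    have hrpow : HasDerivAt (fun x : ℝ => (1 - x) ^ b) (b * (1 - x) ^ (b - 1) * (-1)) x := by
      have h2 : HasDerivAt (fun x : ℝ => 1 - x) (-1) x := by
        simpa using (hasDerivAt_id x).const_sub 1
      exact (Real.hasDerivAt_rpow_const (Or.inl h1x.ne')).comp x h2
    have := hrpow.mul (hFderiv x hx)
    convert this using 1
    case e'_4 => rfl
    case e'_5 => rfl
    case e'_8 => rfl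
    have hpow : (1 - x) ^ b = (1 - x) ^ (b - 1) * (1 - x) := by
      rw [← Real.rpow_add_one h1x.ne' (b - 1), sub_add_cancel]
    rw [hpow]
    linear_combination (-(1 - x) ^ (b - 1)) * (hODE x hx)
  have hsub : Set.Icc (0:ℝ) p ⊆ t := by
    intro x hx
    exact ⟨by linarith [hx.1], by linarith [hx.2, hrp]⟩
  have hcont : ContinuousOn G (Set.Icc 0 p) := by
    intro x hx
    exact ((hGderiv x (hsub hx)).continuousAt).continuousWithinAt
  have hconst := constant_of_has_deriv_right_zero hcont
    (fun x hx => ((hGderiv x (hsub ⟨hx.1, hx.2.le⟩)).hasDerivWithinAt))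
    p (Set.right_mem_Icc.2 hp0.le)
  -- G 0 = 1
  have hF0 : F 0 = 1 := by
    rw [hFdef]; simp only []
    rw [tsum_eq_single 0]
    · rw [hgdef]; simp [risingFact_zero]
    · intro n hn
      rw [hgdef]; simp [zero_pow hn]
  have hG0 : G 0 = 1 := by
    rw [hGdef]; simp [hF0]
  have hGp : (1 - p) ^ b * F p = 1 := by
    have := hconst
    rw [hG0] at this
    exact this
  -- conclude
  have hppow : ∀ n : ℕ, nbW b p n = (1 - p) ^ b * g n p := by
    intro n
    rw [hgdef, nbW]; simp only []
    ring
  calc ∑' ℓ : ℕ, nbW b p ℓ = ∑' ℓ : ℕ, (1 - p) ^ b * g ℓ p := by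
        congr 1; funext ℓ; exact hppow ℓ
    _ = (1 - p) ^ b * F p := tsum_mul_left
    _ = 1 := hGp

lemma desc_mul_real (x k : ℕ) :
    (x:ℝ) * (((x-1).descFactorial k : ℕ) : ℝ) = (x.descFactorial (k+1) : ℝ) := by
  cases x with
  | zero => simp
  | succ m =>
    rw [Nat.succ_sub_one, Nat.succ_descFactorial_succ]
    push_cast
    ring

open Finset in
lemma meixner_rec {p : ℝ} (hp : p ∈ Set.Ioo (0:ℝ) 1) (a : ℝ) (n x : ℕ) :
    (1 - p) * meixner (n+1) a p x
      = (x:ℝ) * meixner n (a+1) p (x-1) - p * (a + (x:ℝ)) * meixner n (a+1) p x := by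
  obtain ⟨hp0, hp1⟩ := hp
  have hpne : p ≠ 0 := hp0.ne'
  have hinv : 1 < 1/p := by rw [lt_div_iff₀ hp0]; linarith
  have he : (1 - 1/p) ≠ 0 := by linarith
  obtain ⟨e, hedef⟩ : ∃ e' : ℝ, e' = 1 - 1/p := ⟨_, rfl⟩
  rw [← hedef] at he
  have hpe : p * e = -(1 - p) := by rw [hedef]; field_simp; ring
  set c' : ℕ → ℝ := fun k => (n.choose k : ℝ) * e ^ ((k:ℤ) - (n:ℤ)) *
    risingFact (a + 1 + k) (n - k) with hc'
  set c : ℕ → ℝ := fun k => (((n+1).choose k : ℕ) : ℝ) * e ^ ((k:ℤ) - ((n:ℤ)+1)) *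
    risingFact (a + k) (n + 1 - k) with hc
  have hmx : ∀ y : ℕ, meixner n (a+1) p y
      = ∑ k ∈ range (n+1), c' k * (y.descFactorial k : ℝ) := by
    intro y
    unfold meixner
    refine Finset.sum_congr rfl fun k _ => ?_
    rw [hc', ← hedef]
  have hmx2 : meixner (n+1) a p x
      = ∑ k ∈ range (n+1+1), c k * (x.descFactorial k : ℝ) := by
    unfold meixner
    apply Finset.sum_congr rfl
    intro k _
    rw [hc, ← hedef]
    push_cast
    ring_nf
  -- coefficient identities
  have key1 : ∀ k, k ≤ n → (1-p) * c (k+1) = (1-p) * c' k - p*(a+(k:ℝ)+1)*c' (k+1) := by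
    intro k hk
    rcases eq_or_lt_of_le hk with rfl | hlt
    · have h1 : c (k+1) = 1 := by
        rw [hc]; simp [risingFact_zero]
      have h2 : c' k = 1 := by
        rw [hc']; simp [risingFact_zero]
      have h3 : c' (k+1) = 0 := by
        rw [hc']
        simp [Nat.choose_succ_self]
      rw [h1, h2, h3]; ring
    · have hk1 : k + 1 ≤ n := hlt
      have hchoose : (((n+1).choose (k+1) : ℕ) : ℝ)
          = (n.choose k : ℝ) + (n.choose (k+1) : ℝ) := by
        rw [Nat.choose_succ_succ]
        push_cast
        ring
      have hnk : n + 1 - (k+1) = n - k := by omega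
      have hnk2 : n - k = (n - (k+1)) + 1 := by omega
      have hexp1 : ((k:ℤ)+1) - ((n:ℤ)+1) = (k:ℤ) - n := by ring
      have hexp2 : ((k:ℤ)+1) - (n:ℤ) = ((k:ℤ) - n) + 1 := by ring
      simp only [hc, hc']
      push_cast
      rw [hexp1, hexp2, hnk2, zpow_add_one₀ he, hchoose]
      rw [show a + ((k:ℝ)+1) = a + 1 + (k:ℝ) by ring]
      rw [risingFact_succ' (a + 1 + (k:ℝ)) (n - (k+1))]
      rw [show a + 1 + (k:ℝ) + 1 = a + 1 + ((k:ℝ)+1) by ring]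
      linear_combination ((a + 1 + (k:ℝ)) * ((n.choose (k+1) : ℝ)) * e^((k:ℤ)-(n:ℤ))
        * risingFact (a + 1 + ((k:ℝ)+1)) (n-(k+1))) * hpe
  have key0 : (1-p) * c 0 = - (p * a * c' 0) := by
    have h1 : c 0 = e ^ (-((n:ℤ)+1)) * (a * risingFact (a+1) n) := by
      rw [hc]
      simp only [Nat.choose_zero_right, Nat.cast_one, one_mul, Nat.cast_zero,
        Nat.cast_ofNat, CharP.cast_eq_zero]
      rw [show ((0:ℤ) - ((n:ℤ)+1)) = -((n:ℤ)+1) by ring]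
      rw [show a + (0:ℝ) = a by ring, Nat.sub_zero, risingFact_succ']
    have h2 : c' 0 = e ^ (-(n:ℤ)) * risingFact (a+1) n := by
      rw [hc']
      simp only [Nat.choose_zero_right, Nat.cast_one, one_mul, Nat.cast_zero,
        CharP.cast_eq_zero]
      rw [show ((0:ℤ) - (n:ℤ)) = -(n:ℤ) by ring]
      rw [show a + 1 + (0:ℝ) = a + 1 by ring, Nat.sub_zero]
    rw [h1, h2]
    have h3 : e ^ (-(n:ℤ)) = e ^ (-((n:ℤ)+1)) * e := by
      rw [← zpow_add_one₀ he]
      norm_num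
    rw [h3]
    linear_combination (a * (e ^ (-((n:ℤ)+1)) * risingFact (a+1) n)) * hpe
  -- now the sum manipulation
  rw [hmx2, hmx, hmx]
  have e1 : (x:ℝ) * (∑ k ∈ range (n+1), c' k * (((x-1).descFactorial k : ℕ) : ℝ))
      = ∑ k ∈ range (n+1), c' k * (x.descFactorial (k+1) : ℝ) := by
    rw [Finset.mul_sum]
    refine Finset.sum_congr rfl fun k _ => ?_
    rw [← desc_mul_real x k]
    ring
  have e2 : p * (a + (x:ℝ)) * (∑ k ∈ range (n+1), c' k * (x.descFactorial k : ℝ))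
      = ∑ k ∈ range (n+1), (p*(a+(k:ℝ))*(c' k)*(x.descFactorial k : ℝ)
          + p*(c' k)*(x.descFactorial (k+1) : ℝ)) := by
    rw [Finset.mul_sum]
    refine Finset.sum_congr rfl fun k _ => ?_
    linear_combination (p * c' k) * descFactorial_real x k
  rw [e1, e2]
  rw [Finset.sum_add_distrib]
  have e4 : ∑ k ∈ range (n+1), p*(a+(k:ℝ))*(c' k)*(x.descFactorial k : ℝ)
      = ∑ k ∈ range (n+1), p*(a+((k:ℝ)+1))*(c' (k+1))*(x.descFactorial (k+1) : ℝ)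
        + p*a*(c' 0)*(x.descFactorial 0 : ℝ) := by
    rw [Finset.sum_range_succ'
      (fun k => p*(a+(k:ℝ))*(c' k)*(x.descFactorial k : ℝ)) n]
    rw [Finset.sum_range_succ
      (fun k => p*(a+((k:ℝ)+1))*(c' (k+1))*(x.descFactorial (k+1) : ℝ)) n]
    have hzero : c' (n+1) = 0 := by
      rw [hc']
      simp [Nat.choose_succ_self]
    rw [hzero]
    push_cast
    ring
  rw [e4]
  rw [Finset.mul_sum]
  rw [Finset.sum_range_succ'
    (fun k => (1-p) * (c k * (x.descFactorial k : ℝ))) (n+1)]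
  have e5 : ∀ k ∈ range (n+1), (1-p) * (c (k+1) * (x.descFactorial (k+1) : ℝ))
      = c' k * (x.descFactorial (k+1) : ℝ)
        - (p*(a+((k:ℝ)+1))*(c' (k+1))*(x.descFactorial (k+1) : ℝ)
          + p*(c' k)*(x.descFactorial (k+1) : ℝ)) := by
    intro k hk
    have hkn : k ≤ n := by
      simpa [Nat.lt_succ_iff] using Finset.mem_range.1 hk
    linear_combination ((x.descFactorial (k+1) : ℝ)) * key1 k hkn
  rw [Finset.sum_congr rfl e5]
  rw [Finset.sum_sub_distrib, Finset.sum_add_distrib]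
  simp only [Nat.descFactorial_zero, Nat.cast_one, mul_one, Nat.cast_zero]
  linarith [key0]

lemma meixner_zero (a p : ℝ) (x : ℕ) : meixner 0 a p x = 1 := by
  unfold meixner
  simp [risingFact_zero]

lemma descFactorial_le (x j : ℕ) : (x.descFactorial j : ℝ) ≤ ((x:ℝ) + 1) ^ j := by
  calc (x.descFactorial j : ℝ) ≤ ((x ^ j : ℕ) : ℝ) := by
        exact_mod_cast Nat.descFactorial_le_pow x j
    _ ≤ ((x:ℝ) + 1) ^ j := by
        push_cast
        exact pow_le_pow_left₀ (by positivity) (by linarith) j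

lemma meixner_bound (n : ℕ) (a p : ℝ) :
    ∃ C : ℝ, 0 ≤ C ∧ ∀ x : ℕ, |meixner n a p x| ≤ C * ((x:ℝ) + 1) ^ n := by
  refine ⟨∑ k ∈ Finset.range (n+1),
    |(n.choose k : ℝ) * (1 - 1 / p) ^ ((k : ℤ) - (n : ℤ)) * risingFact (a + k) (n - k)|,
    Finset.sum_nonneg fun k _ => abs_nonneg _, fun x => ?_⟩
  unfold meixner
  rw [Finset.sum_mul]
  refine (Finset.abs_sum_le_sum_abs _ _).trans (Finset.sum_le_sum fun k hk => ?_)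
  rw [abs_mul]
  have hk' : k ≤ n := by simpa [Nat.lt_succ_iff] using Finset.mem_range.1 hk
  have h1 : |(x.descFactorial k : ℝ)| ≤ ((x:ℝ) + 1) ^ n := by
    rw [abs_of_nonneg (by positivity)]
    calc (x.descFactorial k : ℝ) ≤ ((x:ℝ) + 1) ^ k := descFactorial_le x k
      _ ≤ ((x:ℝ) + 1) ^ n := pow_le_pow_right₀ (by linarith [Nat.cast_nonneg (α:=ℝ) x]) hk'
  exact mul_le_mul_of_nonneg_left h1 (abs_nonneg _)

lemma summable_meixner_desc {p : ℝ} (hp : p ∈ Set.Ioo (0:ℝ) 1) {b : ℝ} (hb : 0 < b)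
    (n j : ℕ) :
    Summable (fun ℓ : ℕ => meixner n b p ℓ * (ℓ.descFactorial j : ℝ) * nbW b p ℓ) := by
  obtain ⟨C, hC0, hC⟩ := meixner_bound n b p
  apply summable_bounded_nbW hb hp (C := C) (d := n + j)
  intro ℓ
  rw [abs_mul, pow_add, ← mul_assoc]
  apply mul_le_mul
  · exact (hC ℓ)
  · rw [abs_of_nonneg (by positivity)]
    exact descFactorial_le ℓ j
  · exact abs_nonneg _
  · positivity

open Finset in
lemma Phi {p : ℝ} (hp : p ∈ Set.Ioo (0:ℝ) 1) :
    ∀ n : ℕ, ∀ j ≤ n, ∀ a : ℝ, 0 < a →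
    ∑' ℓ : ℕ, meixner n a p ℓ * (ℓ.descFactorial j : ℝ) * nbW a p ℓ
      = if j = n then p^n * (n.factorial : ℝ) * risingFact a n / (1-p)^(2*n) else 0 := by
  intro n
  induction n with
  | zero =>
    intro j hj a ha
    interval_cases j
    simp only [if_pos rfl]
    calc ∑' ℓ : ℕ, meixner 0 a p ℓ * (ℓ.descFactorial 0 : ℝ) * nbW a p ℓ
        = ∑' ℓ : ℕ, nbW a p ℓ := by
          apply tsum_congr
          intro ℓ
          rw [meixner_zero]
          simp
      _ = 1 := tsum_nbW_eq_one ha hp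
      _ = _ := by simp [risingFact_zero]
  | succ N IH =>
    intro j hj a ha
    obtain ⟨hp0, hp1⟩ := hp
    have h1p : (0:ℝ) < 1 - p := by linarith
    have h1pne : (1:ℝ) - p ≠ 0 := h1p.ne'
    set c : ℝ := (1 - p)⁻¹ with hcdef
    have ha1 : (0:ℝ) < a + 1 := by linarith
    obtain ⟨C, hC0, hC⟩ := meixner_bound N (a+1) p
    set A : ℕ → ℝ := fun ℓ =>
      (ℓ:ℝ) * meixner N (a+1) p (ℓ-1) * (ℓ.descFactorial j : ℝ) * nbW a p ℓ with hA
    set B : ℕ → ℝ := fun ℓ =>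
      p * (a + (ℓ:ℝ)) * meixner N (a+1) p ℓ * (ℓ.descFactorial j : ℝ) * nbW a p ℓ with hB
    have hkey : ∀ ℓ : ℕ, meixner (N+1) a p ℓ * (ℓ.descFactorial j : ℝ) * nbW a p ℓ
        = c * (A ℓ - B ℓ) := by
      intro ℓ
      have h := meixner_rec ⟨hp0, hp1⟩ a N ℓ
      simp only [hA, hB, hcdef]
      have h2 : meixner (N+1) a p ℓ
          = (1-p)⁻¹ * ((ℓ:ℝ) * meixner N (a+1) p (ℓ-1)
            - p * (a + (ℓ:ℝ)) * meixner N (a+1) p ℓ) := by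
        rw [eq_inv_mul_iff_mul_eq₀ h1pne]
        linarith [h]
      rw [h2]
      ring
    -- summability of A and B
    have hSA : Summable A := by
      apply summable_bounded_nbW ha ⟨hp0, hp1⟩ (C := C) (d := N + 1 + j)
      intro ℓ
      rw [abs_mul, abs_mul]
      have b1 : |(ℓ:ℝ)| ≤ (ℓ:ℝ) + 1 := by
        rw [abs_of_nonneg (Nat.cast_nonneg ℓ)]; linarith
      have b2 : |meixner N (a+1) p (ℓ-1)| ≤ C * ((ℓ:ℝ) + 1) ^ N := by
        refine (hC (ℓ-1)).trans ?_
        apply mul_le_mul_of_nonneg_left _ hC0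
        apply pow_le_pow_left₀ (by positivity)
        have : ((ℓ-1 : ℕ):ℝ) ≤ (ℓ:ℝ) := by exact_mod_cast Nat.sub_le ℓ 1
        linarith
      have b3 : |(ℓ.descFactorial j : ℝ)| ≤ ((ℓ:ℝ) + 1) ^ j := by
        rw [abs_of_nonneg (by positivity)]
        exact descFactorial_le ℓ j
      calc |(ℓ:ℝ)| * |meixner N (a+1) p (ℓ-1)| * |(ℓ.descFactorial j : ℝ)|
          ≤ (((ℓ:ℝ)+1)) * (C * ((ℓ:ℝ) + 1) ^ N) * (((ℓ:ℝ) + 1) ^ j) := by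
            apply mul_le_mul (mul_le_mul b1 b2 (abs_nonneg _) (by positivity)) b3
              (abs_nonneg _) (by positivity)
        _ = C * ((ℓ:ℝ) + 1) ^ (N + 1 + j) := by ring
    have hSB : Summable B := by
      apply summable_bounded_nbW ha ⟨hp0, hp1⟩ (C := p * (a+1) * C) (d := N + 1 + j)
      intro ℓ
      rw [abs_mul, abs_mul]
      have b1 : |p * (a + (ℓ:ℝ))| ≤ p * (a+1) * ((ℓ:ℝ) + 1) := by
        rw [abs_of_nonneg (by positivity)]
        nlinarith [mul_nonneg (mul_nonneg hp0.le ha.le) (Nat.cast_nonneg (α := ℝ) ℓ), hp0.le]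
      have b2 : |meixner N (a+1) p ℓ| ≤ C * ((ℓ:ℝ) + 1) ^ N := hC ℓ
      have b3 : |(ℓ.descFactorial j : ℝ)| ≤ ((ℓ:ℝ) + 1) ^ j := by
        rw [abs_of_nonneg (by positivity)]
        exact descFactorial_le ℓ j
      calc |p * (a + (ℓ:ℝ))| * |meixner N (a+1) p ℓ| * |(ℓ.descFactorial j : ℝ)|
          ≤ (p * (a+1) * ((ℓ:ℝ)+1)) * (C * ((ℓ:ℝ) + 1) ^ N) * (((ℓ:ℝ) + 1) ^ j) := by
            apply mul_le_mul (mul_le_mul b1 b2 (abs_nonneg _) (by positivity)) b3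
              (abs_nonneg _) (by positivity)
        _ = (p * (a+1) * C) * ((ℓ:ℝ) + 1) ^ (N + 1 + j) := by ring
    -- pointwise formulas
    have hTj : Summable (fun m : ℕ =>
        meixner N (a+1) p m * (m.descFactorial j : ℝ) * nbW (a+1) p m) :=
      summable_meixner_desc ⟨hp0, hp1⟩ ha1 N j
    have hTj' : Summable (fun m : ℕ =>
        meixner N (a+1) p m * (m.descFactorial (j-1) : ℝ) * nbW (a+1) p m) :=
      summable_meixner_desc ⟨hp0, hp1⟩ ha1 N (j-1)
    have hAfor : ∀ m : ℕ, A (m+1)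
        = (p*a*c) * (meixner N (a+1) p m * (m.descFactorial j : ℝ) * nbW (a+1) p m)
          + (p*a*c*(j:ℝ)) * (meixner N (a+1) p m * (m.descFactorial (j-1) : ℝ)
            * nbW (a+1) p m) := by
      intro m
      have h1 := nbW_succ (a := a) (p := p) m
      have h2 := nbW_param ha ⟨hp0, hp1⟩ m
      have h2' : ((a:ℝ) + m) * nbW a p m = a * c * nbW (a+1) p m := by
        rw [h2, div_eq_mul_inv, hcdef]
      have h3 := descFactorial_succ_right_real m j
      simp only [hA, Nat.add_sub_cancel]
      push_cast
      rw [h3]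
      linear_combination (meixner N (a+1) p m * ((m.descFactorial j : ℝ)
          + (j:ℝ) * (m.descFactorial (j-1) : ℝ))) * h1
        + (p * meixner N (a+1) p m * ((m.descFactorial j : ℝ)
          + (j:ℝ) * (m.descFactorial (j-1) : ℝ))) * h2'
    have hBfor : ∀ ℓ : ℕ, B ℓ = (p*a*c) * (meixner N (a+1) p ℓ
        * (ℓ.descFactorial j : ℝ) * nbW (a+1) p ℓ) := by
      intro ℓ
      have h2 := nbW_param ha ⟨hp0, hp1⟩ ℓ
      have h2' : ((a:ℝ) + ℓ) * nbW a p ℓ = a * c * nbW (a+1) p ℓ := by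
        rw [h2, div_eq_mul_inv, hcdef]
      simp only [hB]
      linear_combination (p * meixner N (a+1) p ℓ * (ℓ.descFactorial j : ℝ)) * h2'
    -- compute the tsums
    have hsumA : ∑' ℓ, A ℓ
        = (p*a*c) * (∑' m, meixner N (a+1) p m * (m.descFactorial j : ℝ) * nbW (a+1) p m)
          + (p*a*c*(j:ℝ)) * (∑' m, meixner N (a+1) p m * (m.descFactorial (j-1) : ℝ)
            * nbW (a+1) p m) := by
      rw [Summable.tsum_eq_zero_add hSA]
      have hA0 : A 0 = 0 := by simp [hA]
      rw [hA0, zero_add]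
      calc ∑' m, A (m+1)
          = ∑' m : ℕ, ((p*a*c) * (meixner N (a+1) p m * (m.descFactorial j : ℝ)
              * nbW (a+1) p m)
            + (p*a*c*(j:ℝ)) * (meixner N (a+1) p m * (m.descFactorial (j-1) : ℝ)
              * nbW (a+1) p m)) :=
            tsum_congr hAfor
        _ = _ := by
            rw [Summable.tsum_add (hTj.mul_left _) (hTj'.mul_left _), tsum_mul_left, tsum_mul_left]
    have hsumB : ∑' ℓ, B ℓ = (p*a*c) * (∑' m, meixner N (a+1) p m
        * (m.descFactorial j : ℝ) * nbW (a+1) p m) := by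
      calc ∑' ℓ, B ℓ = ∑' ℓ : ℕ, (p*a*c) * (meixner N (a+1) p ℓ
            * (ℓ.descFactorial j : ℝ) * nbW (a+1) p ℓ) :=
            tsum_congr hBfor
        _ = _ := tsum_mul_left
    have hmain : ∑' ℓ : ℕ, meixner (N+1) a p ℓ * (ℓ.descFactorial j : ℝ) * nbW a p ℓ
        = c * (p*a*c*(j:ℝ)) * (∑' m, meixner N (a+1) p m
          * (m.descFactorial (j-1) : ℝ) * nbW (a+1) p m) := by
      calc ∑' ℓ : ℕ, meixner (N+1) a p ℓ * (ℓ.descFactorial j : ℝ) * nbW a p ℓ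
          = ∑' ℓ, c * (A ℓ - B ℓ) := tsum_congr hkey
        _ = c * ∑' ℓ, (A ℓ - B ℓ) := tsum_mul_left
        _ = c * (∑' ℓ, A ℓ - ∑' ℓ, B ℓ) := by rw [Summable.tsum_sub hSA hSB]
        _ = _ := by rw [hsumA, hsumB]; ring
    -- use the inductive hypothesis
    have hj1N : j - 1 ≤ N := by omega
    have hIH := IH (j-1) hj1N (a+1) ha1
    rw [hmain, hIH]
    -- final case analysis
    rcases Nat.eq_zero_or_pos j with rfl | hjpos
    · have hne : ¬ (0 = N + 1) := by omega
      rw [if_neg hne]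
      simp
    · obtain ⟨i, rfl⟩ : ∃ i, j = i + 1 := ⟨j - 1, by omega⟩
      simp only [Nat.add_sub_cancel]
      by_cases hiN : i = N
      · subst hiN
        rw [if_pos rfl, if_pos rfl]
        have hfact : ((i+1).factorial : ℝ) = ((i:ℝ)+1) * (i.factorial : ℝ) := by
          rw [Nat.factorial_succ]; push_cast; ring
        have hrf : risingFact a (i+1) = a * risingFact (a+1) i := risingFact_succ' a i
        have hpow : (1-p) ^ (2*(i+1)) = (1-p) ^ (2*i) * (1-p)^2 := by
          rw [show 2*(i+1) = 2*i + 2 by ring, pow_add]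
        rw [hfact, hrf, hpow, hcdef]
        have hpow2 : ((1:ℝ)-p)^(2*i) ≠ 0 := pow_ne_zero _ h1pne
        push_cast
        field_simp
        ring
      · rw [if_neg hiN, if_neg (by omega : ¬ (i + 1 = N + 1))]
        ring

/-- orthogonality of the monic Meixner polynomials with respect to the
generalized negative binomial distribution `NB(a,p)({ℓ}) = (a)^{(ℓ)} p^ℓ (1-p)^a / ℓ!`:
`∑_ℓ 𝒮_n(ℓ) 𝒮_m(ℓ) NB(a,p)({ℓ}) = 1{n=m} p^n n! (a)^{(n)} / (1-p)^{2n}`. -/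
theorem stmt3 (a p : ℝ) (ha : 0 < a) (hp : p ∈ Set.Ioo (0 : ℝ) 1) (n m : ℕ) :
    ∑' ℓ : ℕ, meixner n a p ℓ * meixner m a p ℓ *
        (risingFact a ℓ * p ^ ℓ * (1 - p) ^ a / (ℓ.factorial : ℝ))
      = if n = m then p ^ n * (n.factorial : ℝ) * risingFact a n / (1 - p) ^ (2 * n)
        else 0 := by
  have main : ∀ n m : ℕ, m ≤ n →
      ∑' ℓ : ℕ, meixner n a p ℓ * meixner m a p ℓ * nbW a p ℓ
        = if n = m then p ^ n * (n.factorial : ℝ) * risingFact a n / (1 - p) ^ (2 * n)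
          else 0 := by
    intro n m hmn
    have step1 : ∀ ℓ : ℕ, meixner n a p ℓ * meixner m a p ℓ * nbW a p ℓ
        = ∑ k ∈ Finset.range (m+1),
            ((m.choose k : ℝ) * (1 - 1 / p) ^ ((k : ℤ) - (m : ℤ)) * risingFact (a + k) (m - k))
            * (meixner n a p ℓ * (ℓ.descFactorial k : ℝ) * nbW a p ℓ) := by
      intro ℓ
      have hm : meixner m a p ℓ = ∑ k ∈ Finset.range (m+1),
          ((m.choose k : ℝ) * (1 - 1 / p) ^ ((k : ℤ) - (m : ℤ)) * risingFact (a + k) (m - k))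
          * (ℓ.descFactorial k : ℝ) := rfl
      rw [hm, Finset.mul_sum, Finset.sum_mul]
      exact Finset.sum_congr rfl fun k _ => by ring
    calc ∑' ℓ : ℕ, meixner n a p ℓ * meixner m a p ℓ * nbW a p ℓ
        = ∑' ℓ : ℕ, ∑ k ∈ Finset.range (m+1),
            ((m.choose k : ℝ) * (1 - 1 / p) ^ ((k : ℤ) - (m : ℤ)) * risingFact (a + k) (m - k))
            * (meixner n a p ℓ * (ℓ.descFactorial k : ℝ) * nbW a p ℓ) := tsum_congr step1
      _ = ∑ k ∈ Finset.range (m+1), ∑' ℓ : ℕ,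
            ((m.choose k : ℝ) * (1 - 1 / p) ^ ((k : ℤ) - (m : ℤ)) * risingFact (a + k) (m - k))
            * (meixner n a p ℓ * (ℓ.descFactorial k : ℝ) * nbW a p ℓ) :=
          Summable.tsum_finsetSum (fun k _ => Summable.mul_left _ (summable_meixner_desc hp ha n k))
      _ = ∑ k ∈ Finset.range (m+1),
            ((m.choose k : ℝ) * (1 - 1 / p) ^ ((k : ℤ) - (m : ℤ)) * risingFact (a + k) (m - k))
            * (if k = n then p^n * (n.factorial : ℝ) * risingFact a n / (1-p)^(2*n) else 0) := by
          refine Finset.sum_congr rfl fun k hk => ?_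
          rw [tsum_mul_left]
          congr 1
          exact Phi hp n k (le_trans (by simpa [Nat.lt_succ_iff] using Finset.mem_range.1 hk) hmn) a ha
      _ = if n = m then p ^ n * (n.factorial : ℝ) * risingFact a n / (1 - p) ^ (2 * n)
          else 0 := by
          by_cases hnm : n = m
          · subst hnm
            rw [if_pos rfl]
            rw [Finset.sum_eq_single_of_mem n (Finset.self_mem_range_succ n)]
            · rw [if_pos rfl]
              simp [Nat.choose_self, Nat.sub_self, risingFact_zero, sub_self]
            · intro k _ hkn
              rw [if_neg hkn, mul_zero]
          · rw [if_neg hnm]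
            apply Finset.sum_eq_zero
            intro k hk
            have hkm : k ≤ m := by simpa [Nat.lt_succ_iff] using Finset.mem_range.1 hk
            have : k ≠ n := by omega
            rw [if_neg this, mul_zero]
  rcases le_total m n with h | h
  · exact main n m h
  · have hsym := main m n h
    calc ∑' ℓ : ℕ, meixner n a p ℓ * meixner m a p ℓ * nbW a p ℓ
        = ∑' ℓ : ℕ, meixner m a p ℓ * meixner n a p ℓ * nbW a p ℓ :=
          tsum_congr fun ℓ => by ring
      _ = if m = n then p ^ m * (m.factorial : ℝ) * risingFact a m / (1 - p) ^ (2 * m)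
          else 0 := hsym
      _ = if n = m then p ^ n * (n.factorial : ℝ) * risingFact a n / (1 - p) ^ (2 * n)
          else 0 := by
          by_cases hnm : n = m
          · subst hnm; simp
          · rw [if_neg hnm, if_neg (fun hx => hnm hx.symm)]
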